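/- Let G be a finitely generated group with inverse-closed generating set Σ = X ∪ X⁻¹. The word problem WP(G, X) is a visibly pushdown language (for some partition of Σ) if and only if G is finite. -/

import Mathlib

inductive VKind | call | internal | response
deriving DecidableEq

/-- A (nondeterministic) visibly pushdown automaton over alphabet `A`
partitioned by `kind` into call, internal and response letters. -/
structure VPA (A : Type) (kind : A → VKind) where
  Q : Type
  Γ : Type
  [finQ : Fintype Q]
  [finΓ : Fintype Γ]
  init : Q
  accept : Set Q
  /-- transitions on call letters: push one symbol, do not inspect the stack -/
  δc : Q → A → Set (Q × Γ)
  /-- transitions on internal letters: do not inspect or modify the stack -/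
  δi : Q → A → Set Q
  /-- transitions on response letters: pop the topmost stack symbol -/
  δr : Q → A → Γ → Set Q
  /-- transitions on response letters read on the empty stack (bottom symbol) -/
  δb : Q → A → Set Q

namespace VPA

variable {A : Type} {kind : A → VKind}

inductive Steps (M : VPA A kind) : M.Q × List M.Γ → List A → M.Q × List M.Γ → Prop
  | nil (c) : Steps M c [] c
  | call {q s a q' γ w c} : kind a = .call → (q', γ) ∈ M.δc q a →
      Steps M (q', γ :: s) w c → Steps M (q, s) (a :: w) c
  | internal {q s a q' w c} : kind a = .internal → q' ∈ M.δi q a →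
      Steps M (q', s) w c → Steps M (q, s) (a :: w) c
  | pop {q γ s a q' w c} : kind a = .response → q' ∈ M.δr q a γ →
      Steps M (q', s) w c → Steps M (q, γ :: s) (a :: w) c
  | popEmpty {q a q' w c} : kind a = .response → q' ∈ M.δb q a →
      Steps M (q', []) w c → Steps M (q, []) (a :: w) c

/-- A VPA accepts a word if reading it from the initial state with empty stack
can end in an accepting state (with arbitrary stack contents). -/
def Accepts (M : VPA A kind) (w : List A) : Prop :=
  ∃ c : M.Q × List M.Γ, M.Steps (M.init, []) w c ∧ c.1 ∈ M.accept

end VPA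

/-- `L` is a visibly pushdown language over the partition `kind`. -/
def IsVPL {A : Type} (kind : A → VKind) (L : Set (List A)) : Prop :=
  ∃ M : VPA A kind, L = {w | M.Accepts w}

/-! ### Auxiliary machinery for the forward direction -/

/-- `NN kind n w` : reading `w` starting at (relative) stack height `n`, the
height never goes below `0` (calls +1, internals 0, responses −1). -/
inductive NN (kind : A → VKind) : ℕ → List A → Prop where
  | nil (n) : NN kind n []
  | call {n a w} : kind a = .call → NN kind (n+1) w → NN kind n (a :: w)
  | internal {n a w} : kind a = .internal → NN kind n w → NN kind n (a :: w)
  | response {n a w} : kind a = .response → NN kind n w → NN kind (n+1) (a :: w)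

variable {A : Type} {kind : A → VKind}

lemma NN_of_le : ∀ {w : List A} {n : ℕ}, w.length ≤ n → NN kind n w := by
  intro w
  induction w with
  | nil => exact fun {n} _ => NN.nil n
  | cons a w ih =>
    intro n h
    rw [List.length_cons] at h
    cases hk : kind a with
    | call => exact NN.call hk (ih (by omega))
    | internal => exact NN.internal hk (ih (by omega))
    | response =>
      cases n with
      | zero => omega
      | succ n => exact NN.response hk (ih (by omega))

lemma NN_calls_append {c : A} (hc : kind c = .call) :
    ∀ (N n : ℕ) {y : List A}, NN kind (n + N) y → NN kind n (List.replicate N c ++ y) := by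
  intro N
  induction N with
  | zero => exact fun n y h => h
  | succ N ih =>
    intro n y h
    rw [List.replicate_succ, List.cons_append]
    refine NN.call hc (ih (n+1) ?_)
    have e : n + 1 + N = n + (N + 1) := by omega
    rw [e]; exact h

/-- States reachable from the initial configuration after reading `w`. -/
def reach (M : VPA A kind) (w : List A) : Set M.Q :=
  {q | ∃ s, M.Steps (M.init, []) w (q, s)}

lemma steps_append (M : VPA A kind) {c₀ : M.Q × List M.Γ} {w : List A} {c₁} 
    (h : M.Steps c₀ w c₁) :
    ∀ {v : List A} {c₂}, M.Steps c₁ v c₂ → M.Steps c₀ (w ++ v) c₂ := by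
  induction h with
  | nil c => exact fun h2 => h2
  | call hk hm h' ih => exact fun h2 => VPA.Steps.call hk hm (ih h2)
  | internal hk hm h' ih => exact fun h2 => VPA.Steps.internal hk hm (ih h2)
  | pop hk hm h' ih => exact fun h2 => VPA.Steps.pop hk hm (ih h2)
  | popEmpty hk hm h' ih => exact fun h2 => VPA.Steps.popEmpty hk hm (ih h2)

lemma steps_split (M : VPA A kind) {c₀ : M.Q × List M.Γ} {z : List A} {c₂}
    (h : M.Steps c₀ z c₂) :
    ∀ {w v : List A}, z = w ++ v → ∃ c₁, M.Steps c₀ w c₁ ∧ M.Steps c₁ v c₂ := by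
  induction h with
  | nil c =>
    intro w v he
    obtain ⟨hw, hv⟩ := List.append_eq_nil_iff.mp he.symm
    subst hw; subst hv
    exact ⟨c, VPA.Steps.nil c, VPA.Steps.nil c⟩
  | call hk hm h' ih =>
    intro w v he
    cases w with
    | nil =>
      subst he
      exact ⟨_, VPA.Steps.nil _, VPA.Steps.call hk hm h'⟩
    | cons b w' =>
      rw [List.cons_append] at he
      injection he with e1 e2
      subst e1
      obtain ⟨c₁, s1, s2⟩ := ih e2
      exact ⟨c₁, VPA.Steps.call hk hm s1, s2⟩
  | internal hk hm h' ih =>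
    intro w v he
    cases w with
    | nil =>
      subst he
      exact ⟨_, VPA.Steps.nil _, VPA.Steps.internal hk hm h'⟩
    | cons b w' =>
      rw [List.cons_append] at he
      injection he with e1 e2
      subst e1
      obtain ⟨c₁, s1, s2⟩ := ih e2
      exact ⟨c₁, VPA.Steps.internal hk hm s1, s2⟩
  | pop hk hm h' ih =>
    intro w v he
    cases w with
    | nil =>
      subst he
      exact ⟨_, VPA.Steps.nil _, VPA.Steps.pop hk hm h'⟩
    | cons b w' =>
      rw [List.cons_append] at he
      injection he with e1 e2
      subst e1
      obtain ⟨c₁, s1, s2⟩ := ih e2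
      exact ⟨c₁, VPA.Steps.pop hk hm s1, s2⟩
  | popEmpty hk hm h' ih =>
    intro w v he
    cases w with
    | nil =>
      subst he
      exact ⟨_, VPA.Steps.nil _, VPA.Steps.popEmpty hk hm h'⟩
    | cons b w' =>
      rw [List.cons_append] at he
      injection he with e1 e2
      subst e1
      obtain ⟨c₁, s1, s2⟩ := ih e2
      exact ⟨c₁, VPA.Steps.popEmpty hk hm s1, s2⟩

/-- Reading a call-free word keeps the stack empty. -/
lemma steps_keepempty (M : VPA A kind) {cc : M.Q × List M.Γ} {w : List A} {c}
    (h : M.Steps cc w c) :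
    (∀ a ∈ w, kind a ≠ .call) → cc.2 = [] → c.2 = [] := by
  induction h with
  | nil c => exact fun _ he => he
  | call hk hm h' ih =>
    intro hw _
    exact absurd hk (hw _ List.mem_cons_self)
  | internal hk hm h' ih =>
    intro hw he
    exact ih (fun b hb => hw b (List.mem_cons_of_mem _ hb)) he
  | pop hk hm h' ih =>
    intro _ he
    exact (List.cons_ne_nil _ _ he).elim
  | popEmpty hk hm h' ih =>
    intro hw _
    exact ih (fun b hb => hw b (List.mem_cons_of_mem _ hb)) rfl

/-- Key lemma: reading a word with nonnegative height profile never touches the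
stack below its starting level, so the run is independent of the initial stack. -/
lemma steps_nn (M : VPA A kind) {cc : M.Q × List M.Γ} {x : List A} {c}
    (h : M.Steps cc x c) :
    ∀ {n : ℕ} (u s : List M.Γ), NN kind n x → u.length = n → cc.2 = u ++ s →
      ∃ q' u', c = (q', u' ++ s) ∧ ∀ s2, M.Steps (cc.1, u ++ s2) x (q', u' ++ s2) := by
  induction h with
  | nil c0 =>
    intro n u s _ _ h2
    exact ⟨c0.1, u, Prod.ext_iff.mpr ⟨rfl, h2⟩, fun s2 => VPA.Steps.nil _⟩
  | @call q s0 a q₁ γ w c hk hm h' ih =>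
    intro n u s hnn hu h2
    cases hnn with
    | @call _ _ _ hk2 hnn' =>
      obtain ⟨q', u', hc, hall⟩ := ih (γ :: u) s hnn' (by simp [hu])
        (congrArg (fun l => γ :: l) h2)
      exact ⟨q', u', hc, fun s2 => VPA.Steps.call hk hm (hall s2)⟩
    | @internal _ _ _ hk2 _ => rw [hk] at hk2; exact absurd hk2 (by decide)
    | @response _ _ _ hk2 _ => rw [hk] at hk2; exact absurd hk2 (by decide)
  | @internal q s0 a q₁ w c hk hm h' ih =>
    intro n u s hnn hu h2
    cases hnn with
    | @internal _ _ _ hk2 hnn' =>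
      obtain ⟨q', u', hc, hall⟩ := ih u s hnn' hu h2
      exact ⟨q', u', hc, fun s2 => VPA.Steps.internal hk hm (hall s2)⟩
    | @call _ _ _ hk2 _ => rw [hk] at hk2; exact absurd hk2 (by decide)
    | @response _ _ _ hk2 _ => rw [hk] at hk2; exact absurd hk2 (by decide)
  | @pop q γ s0 a q₁ w c hk hm h' ih =>
    intro n u s hnn hu h2
    cases hnn with
    | @response n₀ _ _ hk2 hnn' =>
      cases u with
      | nil => simp at hu
      | cons γ₂ u₀ =>
        rw [List.cons_append] at h2
        injection h2 with e1 e2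
        subst e1
        obtain ⟨q', u', hc, hall⟩ := ih u₀ s hnn' (by simpa using hu) e2
        exact ⟨q', u', hc, fun s2 => VPA.Steps.pop hk hm (hall s2)⟩
    | @call _ _ _ hk2 _ => rw [hk] at hk2; exact absurd hk2 (by decide)
    | @internal _ _ _ hk2 _ => rw [hk] at hk2; exact absurd hk2 (by decide)
  | @popEmpty q a q₁ w c hk hm h' ih =>
    intro n u s hnn hu h2
    cases hnn with
    | @response n₀ _ _ hk2 hnn' =>
      obtain ⟨hu0, _⟩ := List.append_eq_nil_iff.mp h2.symm
      subst hu0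
      simp at hu
    | @call _ _ _ hk2 _ => rw [hk] at hk2; exact absurd hk2 (by decide)
    | @internal _ _ _ hk2 _ => rw [hk] at hk2; exact absurd hk2 (by decide)

/-- Membership of `w ++ x` only depends on `reach M w` when `x` is nonneg. -/
lemma detA (M : VPA A kind) {x : List A} (hx : NN kind 0 x) (w : List A) :
    M.Accepts (w ++ x) ↔
      ∃ q, q ∈ reach M w ∧ ∃ c, M.Steps (q, ([] : List M.Γ)) x c ∧ c.1 ∈ M.accept := by
  constructor
  · rintro ⟨c, hs, hacc⟩
    obtain ⟨⟨q₁, s₁⟩, h1, h2⟩ := steps_split M hs rfl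
    obtain ⟨q', u', hc, hall⟩ := steps_nn M h2 (n := 0) [] s₁ hx rfl rfl
    refine ⟨q₁, ⟨s₁, h1⟩, (q', u' ++ []), hall [], ?_⟩
    rw [hc] at hacc
    exact hacc
  · rintro ⟨q, ⟨s, hw1⟩, c, hx1, hacc⟩
    obtain ⟨q', u', hc, hall⟩ := steps_nn M hx1 (n := 0) [] [] hx rfl rfl
    refine ⟨(q', u' ++ s), steps_append M hw1 (hall s), ?_⟩
    rw [hc] at hacc
    exact hacc

/-- Membership of `w ++ x` only depends on `reach M w` when `w` is call-free. -/
lemma detB (M : VPA A kind) {w : List A} (hw : ∀ a ∈ w, kind a ≠ .call) (x : List A) :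
    M.Accepts (w ++ x) ↔
      ∃ q, q ∈ reach M w ∧ ∃ c, M.Steps (q, ([] : List M.Γ)) x c ∧ c.1 ∈ M.accept := by
  constructor
  · rintro ⟨c, hs, hacc⟩
    obtain ⟨⟨q₁, s₁⟩, h1, h2⟩ := steps_split M hs rfl
    have hse : s₁ = [] := steps_keepempty M h1 hw rfl
    subst hse
    exact ⟨q₁, ⟨[], h1⟩, c, h2, hacc⟩
  · rintro ⟨q, ⟨s, hw1⟩, c, hx1, hacc⟩
    have hse : s = [] := steps_keepempty M hw1 hw rfl
    subst hse
    exact ⟨c, steps_append M hw1 hx1, hacc⟩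

/-- A finitely generated group has visibly pushdown word problem (for some
partition of its inverse-closed generating alphabet) if and only if it is
finite. -/
theorem vpl_wordProblem_iff_finite {G : Type} [Group G]
    {A : Type} [Fintype A] (σ : A → G)
    (hinv : ∀ s : A, ∃ t : A, σ t = (σ s)⁻¹)
    (hgen : Subgroup.closure (Set.range σ) = ⊤) :
    (∃ kind : A → VKind, IsVPL kind {w : List A | (w.map σ).prod = 1}) ↔ Finite G := by
  constructor
  · rintro ⟨kind, M, hL⟩
    haveI := M.finQ
    classical
    have hmem : ∀ w : List A, (w.map σ).prod = 1 ↔ M.Accepts w :=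
      fun w => Set.ext_iff.mp hL w
    -- inverse letters
    set invA : A → A := fun a => (hinv a).choose with hinvAdef
    have hσinv : ∀ a, σ (invA a) = (σ a)⁻¹ := fun a => (hinv a).choose_spec
    -- every group element is represented by a word
    have hinvword : ∀ w : List A, (((w.map invA).reverse).map σ).prod = ((w.map σ).prod)⁻¹ := by
      intro w
      induction w with
      | nil => simp
      | cons a w ih =>
        rw [List.map_cons, List.reverse_cons, List.map_append, List.prod_append, ih]
        simp [hσinv, mul_inv_rev]
    have hrep : ∀ g : G, ∃ w : List A, (w.map σ).prod = g := by
      intro g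
      let K : Subgroup G :=
        { carrier := {g | ∃ w : List A, (w.map σ).prod = g}
          one_mem' := ⟨[], by simp⟩
          mul_mem' := by
            rintro x y ⟨w, rfl⟩ ⟨v, rfl⟩
            exact ⟨w ++ v, by rw [List.map_append, List.prod_append]⟩
          inv_mem' := by
            rintro x ⟨w, rfl⟩
            exact ⟨(w.map invA).reverse, hinvword w⟩ }
      have hle : Subgroup.closure (Set.range σ) ≤ K :=
        Subgroup.closure_le K |>.mpr (by rintro x ⟨a, rfl⟩; exact ⟨[a], by simp⟩)
      have hg : g ∈ Subgroup.closure (Set.range σ) := by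
        rw [hgen]; exact Subgroup.mem_top g
      exact hle hg
    choose rep hrepspec using hrep
    by_cases hcall : ∃ c0 : A, kind c0 = .call
    · obtain ⟨c0, hc0⟩ := hcall
      set t := invA c0 with htdef
      have htσ : σ t = (σ c0)⁻¹ := hσinv c0
      have hNNc : ∀ (n k : ℕ), NN kind k (List.replicate n c0) := by
        intro n
        induction n with
        | zero => exact fun k => NN.nil k
        | succ n ih =>
          intro k
          rw [List.replicate_succ]
          exact NN.call hc0 (ih (k+1))
      -- pigeonhole to find a torsion relation for σ c0
      haveI : Finite (Set M.Q) := inferInstance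
      obtain ⟨m, m', hmm', hFeq⟩ :=
        Finite.exists_ne_map_eq_of_infinite (fun n => reach M (List.replicate n t))
      have hFeq' : reach M (List.replicate m t) = reach M (List.replicate m' t) := hFeq
      have hacc1 : M.Accepts (List.replicate m' t ++ List.replicate m' c0) := by
        rw [← hmem, List.map_append, List.prod_append, List.map_replicate,
          List.map_replicate, List.prod_replicate, List.prod_replicate, htσ, inv_pow,
          inv_mul_cancel]
      obtain ⟨q, hq, hA⟩ := (detA M (hNNc m' 0) (List.replicate m' t)).mp hacc1
      have hq' : q ∈ reach M (List.replicate m t) := by rw [hFeq']; exact hq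
      have hacc2 : M.Accepts (List.replicate m t ++ List.replicate m' c0) :=
        (detA M (hNNc m' 0) (List.replicate m t)).mpr ⟨q, hq', hA⟩
      have hπ := (hmem _).mpr hacc2
      rw [List.map_append, List.prod_append, List.map_replicate, List.map_replicate,
        List.prod_replicate, List.prod_replicate, htσ, inv_pow] at hπ
      have hpow : (σ c0) ^ m = (σ c0) ^ m' := inv_mul_eq_one.mp hπ
      have hcan : ∀ {i j : ℕ}, i < j → (σ c0) ^ i = (σ c0) ^ j → (σ c0) ^ (j - i) = 1 := by
        intro i j hij he
        have e : j = (j - i) + i := by omega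
        rw [e, pow_add] at he
        exact mul_right_cancel (he.symm.trans (one_mul _).symm)
      obtain ⟨d, hd0, hd1⟩ : ∃ d, 0 < d ∧ (σ c0) ^ d = 1 := by
        rcases hmm'.lt_or_gt with hlt | hlt
        · exact ⟨m' - m, by omega, hcan hlt hpow⟩
        · exact ⟨m - m', by omega, hcan hlt hpow.symm⟩
      -- the padded nonneg test words
      have hNNx : ∀ y : List A, NN kind 0 (List.replicate (d * y.length) c0 ++ y) := by
        intro y
        refine NN_calls_append hc0 _ 0 (NN_of_le ?_)
        have := Nat.le_mul_of_pos_left y.length hd0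
        omega
      have hπx : ∀ g : G,
          (((List.replicate (d * (rep g⁻¹).length) c0 ++ rep g⁻¹).map σ)).prod = g⁻¹ := by
        intro g
        rw [List.map_append, List.prod_append, List.map_replicate, List.prod_replicate,
          pow_mul, hd1, one_pow, one_mul, hrepspec]
      have hinj : Function.Injective (fun g : G => reach M (rep g)) := by
        intro g g' hgg'
        simp only at hgg'
        set x := List.replicate (d * (rep g⁻¹).length) c0 ++ rep g⁻¹ with hxdef
        have h1 : M.Accepts (rep g ++ x) := by
          rw [← hmem, List.map_append, List.prod_append, hrepspec, hxdef, hπx,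
            mul_inv_cancel]
        obtain ⟨q, hq, hA⟩ := (detA M (hNNx (rep g⁻¹)) (rep g)).mp h1
        have hq' : q ∈ reach M (rep g') := by rw [← hgg']; exact hq
        have h3 : M.Accepts (rep g' ++ x) :=
          (detA M (hNNx (rep g⁻¹)) (rep g')).mpr ⟨q, hq', hA⟩
        have h4 := (hmem _).mpr h3
        rw [List.map_append, List.prod_append, hrepspec, hxdef, hπx] at h4
        exact (mul_inv_eq_one.mp h4).symm
      exact Finite.of_injective _ hinj
    · push_neg at hcall
      have hinj : Function.Injective (fun g : G => reach M (rep g)) := by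
        intro g g' hgg'
        simp only at hgg'
        have h1 : M.Accepts (rep g ++ rep g⁻¹) := by
          rw [← hmem, List.map_append, List.prod_append, hrepspec, hrepspec,
            mul_inv_cancel]
        obtain ⟨q, hq, hA⟩ := (detB M (fun a _ => hcall a) (rep g⁻¹)).mp h1
        have hq' : q ∈ reach M (rep g') := by rw [← hgg']; exact hq
        have h3 : M.Accepts (rep g' ++ rep g⁻¹) :=
          (detB M (fun a _ => hcall a) (rep g⁻¹)).mpr ⟨q, hq', hA⟩
        have h4 := (hmem _).mpr h3
        rw [List.map_append, List.prod_append, hrepspec, hrepspec] at h4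
        exact (mul_inv_eq_one.mp h4).symm
      exact Finite.of_injective _ hinj
  · intro hfin
    haveI : Fintype G := Fintype.ofFinite G
    refine ⟨fun _ => VKind.internal,
      ⟨{ Q := G, Γ := Unit, finQ := inferInstance, finΓ := inferInstance,
         init := 1, accept := {1},
         δc := fun _ _ => ∅, δi := fun q a => {q * σ a},
         δr := fun _ _ _ => ∅, δb := fun _ _ => ∅ }, ?_⟩⟩
    set M : VPA A (fun _ => VKind.internal) :=
      { Q := G, Γ := Unit, finQ := inferInstance, finΓ := inferInstance,
        init := 1, accept := {1},
        δc := fun _ _ => ∅, δi := fun q a => {q * σ a},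
        δr := fun _ _ _ => ∅, δb := fun _ _ => ∅ } with hM
    have fwd : ∀ {cc : M.Q × List M.Γ} {w : List A} {c},
        M.Steps cc w c → c = (cc.1 * (w.map σ).prod, cc.2) := by
      intro cc w c h
      induction h with
      | nil c => simp
      | call hk _ _ _ => exact VKind.noConfusion hk
      | @internal q s a q' w c hk hm h' ih =>
        have hq' : q' = q * σ a := hm
        subst hq'
        rw [ih]
        simp [mul_assoc]
      | pop hk _ _ _ => exact VKind.noConfusion hk
      | popEmpty hk _ _ _ => exact VKind.noConfusion hk
    have bwd : ∀ (w : List A) (q : G), M.Steps (q, []) w (q * (w.map σ).prod, []) := by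
      intro w
      induction w with
      | nil =>
        intro q
        simpa using VPA.Steps.nil (M := M) (q, ([] : List M.Γ))
      | cons a w ih =>
        intro q
        have h := VPA.Steps.internal (M := M) (a := a) rfl
          (Set.mem_singleton (q * σ a)) (ih (q * σ a))
        simpa [mul_assoc] using h
    ext w
    simp only [Set.mem_setOf_eq]
    constructor
    · intro hw
      exact ⟨(1 * (w.map σ).prod, []), bwd w 1, by simp [hw]; exact Set.mem_singleton _⟩
    · rintro ⟨c, hs, hacc⟩
      rw [fwd hs] at hacc
      have hacc' : (1 : G) * (w.map σ).prod = 1 := hacc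
      simpa using hacc'
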